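/- Let Ω ⊆ ℝ^n be open and let u, φ be C² on Ω with φ > 0. Then pointwise on Ω: |∇u|⁸ + (Δφ/φ + 68) u⁸ = ( |∇u|⁴ − 8u⁴ )² + ( |∇(u²)|² − 2u⁴ )² + |∇(u⁴) − (∇φ/φ) u⁴|² + div((∇φ/φ) u⁸). -/

import Mathlib

open MeasureTheory Finset
open scoped RealInnerProductSpace

noncomputable def grad {n : ℕ} (f : EuclideanSpace ℝ (Fin n) → ℝ) :
    EuclideanSpace ℝ (Fin n) → EuclideanSpace ℝ (Fin n) :=
  fun x => gradient f x

noncomputable def dvg {n : ℕ} (V : EuclideanSpace ℝ (Fin n) → EuclideanSpace ℝ (Fin n)) :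
    EuclideanSpace ℝ (Fin n) → ℝ :=
  fun x => ∑ i, fderiv ℝ V x (EuclideanSpace.single i 1) i

noncomputable def lap {n : ℕ} (f : EuclideanSpace ℝ (Fin n) → ℝ) :
    EuclideanSpace ℝ (Fin n) → ℝ :=
  dvg (grad f)

theorem stmt9 {n : ℕ} (Ω : Set (EuclideanSpace ℝ (Fin n))) (hΩ : IsOpen Ω)
    (u φ : EuclideanSpace ℝ (Fin n) → ℝ)
    (hu : ContDiffOn ℝ 2 u Ω) (hφ : ContDiffOn ℝ 2 φ Ω)
    (hφpos : ∀ x ∈ Ω, 0 < φ x) :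
    ∀ x ∈ Ω,
      ‖grad u x‖ ^ 8 + (lap φ x / φ x + 68) * (u x) ^ 8 =
        (‖grad u x‖ ^ 4 - 8 * (u x) ^ 4) ^ 2 +
        (‖grad (fun y => (u y) ^ 2) x‖ ^ 2 - 2 * (u x) ^ 4) ^ 2 +
        ‖grad (fun y => (u y) ^ 4) x - ((u x) ^ 4 / φ x) • grad φ x‖ ^ 2 +
        dvg (fun y => ((u y) ^ 8 / φ y) • grad φ y) x := by
  intro x hx
  have hxn := hΩ.mem_nhds hx
  have huA : ContDiffAt ℝ 2 u x := hu.contDiffAt hxn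
  have hφA : ContDiffAt ℝ 2 φ x := hφ.contDiffAt hxn
  have hud : DifferentiableAt ℝ u x := huA.differentiableAt two_ne_zero
  have hφd : DifferentiableAt ℝ φ x := hφA.differentiableAt two_ne_zero
  have hΦ : φ x ≠ 0 := ne_of_gt (hφpos x hx)
  have keyu : ∀ i, fderiv ℝ u x (EuclideanSpace.single i 1) = grad u x i := fun i => by
    rw [hud.hasGradientAt.hasFDerivAt.fderiv, InnerProductSpace.toDual_apply_apply,
      EuclideanSpace.inner_single_right]
    simp [grad]
  have keyφ : ∀ i, fderiv ℝ φ x (EuclideanSpace.single i 1) = grad φ x i := fun i => by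
    rw [hφd.hasGradientAt.hasFDerivAt.fderiv, InnerProductSpace.toDual_apply_apply,
      EuclideanSpace.inner_single_right]
    simp [grad]
  have h2 : HasFDerivAt (fun y => u y ^ 2) ((2 * u x : ℝ) • fderiv ℝ u x) x := by
    simpa [Function.comp_def] using (hasDerivAt_pow 2 (u x)).comp_hasFDerivAt x hud.hasFDerivAt
  have h4 : HasFDerivAt (fun y => u y ^ 4) ((4 * u x ^ 3 : ℝ) • fderiv ℝ u x) x := by
    simpa [Function.comp_def] using (hasDerivAt_pow 4 (u x)).comp_hasFDerivAt x hud.hasFDerivAt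
  have h8 : HasFDerivAt (fun y => u y ^ 8) ((8 * u x ^ 7 : ℝ) • fderiv ℝ u x) x := by
    simpa [Function.comp_def] using (hasDerivAt_pow 8 (u x)).comp_hasFDerivAt x hud.hasFDerivAt
  have hg2 : grad (fun y => u y ^ 2) x = (2 * u x) • grad u x := by
    show (InnerProductSpace.toDual ℝ _).symm _ = _
    rw [h2.fderiv, _root_.map_smul]
    rfl
  have hg4 : grad (fun y => u y ^ 4) x = (4 * u x ^ 3) • grad u x := by
    show (InnerProductSpace.toDual ℝ _).symm _ = _
    rw [h4.fderiv, _root_.map_smul]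
    rfl
  have hinv : HasFDerivAt (fun y => (φ y)⁻¹) ((-(φ x ^ 2)⁻¹ : ℝ) • fderiv ℝ φ x) x :=
    (hasDerivAt_inv hΦ).comp_hasFDerivAt x hφd.hasFDerivAt
  have hc : HasFDerivAt (fun y => u y ^ 8 / φ y)
      ((u x ^ 8) • ((-(φ x ^ 2)⁻¹ : ℝ) • fderiv ℝ φ x)
        + ((φ x)⁻¹ : ℝ) • ((8 * u x ^ 7 : ℝ) • fderiv ℝ u x)) x := by
    simp only [div_eq_mul_inv]
    exact h8.mul hinv
  have h1 : ContDiffAt ℝ 1 (fderiv ℝ φ) x := hφA.fderiv_right (by norm_num)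
  have hgφd : DifferentiableAt ℝ (grad φ) x := by
    have hL := ((InnerProductSpace.toDual ℝ
        (EuclideanSpace ℝ (Fin n))).symm.toContinuousLinearEquiv.toContinuousLinearMap).differentiable
    exact (hL.differentiableAt).comp x (h1.differentiableAt one_ne_zero)
  have hG : HasFDerivAt (grad φ) (fderiv ℝ (grad φ) x) x := hgφd.hasFDerivAt
  have hV : HasFDerivAt (fun y => (u y ^ 8 / φ y) • grad φ y)
      ((u x ^ 8 / φ x) • fderiv ℝ (grad φ) x
        + ((u x ^ 8) • ((-(φ x ^ 2)⁻¹ : ℝ) • fderiv ℝ φ x)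
            + ((φ x)⁻¹ : ℝ) • ((8 * u x ^ 7 : ℝ) • fderiv ℝ u x)).smulRight (grad φ x)) x :=
    hc.smul hG
  have hinner : ∀ a b : EuclideanSpace ℝ (Fin n), ⟪a, b⟫ = ∑ i, a i * b i := by
    intro a b
    simp [PiLp.inner_apply, RCLike.inner_apply, mul_comm]
  have hdvg : dvg (fun y => (u y ^ 8 / φ y) • grad φ y) x
      = (u x ^ 8 / φ x) * lap φ x
        + ((u x ^ 8 * (-(φ x ^ 2)⁻¹)) * ⟪grad φ x, grad φ x⟫
           + ((φ x)⁻¹ * (8 * u x ^ 7)) * ⟪grad u x, grad φ x⟫) := by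
    show (∑ i, fderiv ℝ (fun y => (u y ^ 8 / φ y) • grad φ y) x (EuclideanSpace.single i 1) i) = _
    rw [hV.fderiv]
    have step : ∀ i : Fin n,
        ((u x ^ 8 / φ x) • fderiv ℝ (grad φ) x
          + ((u x ^ 8) • ((-(φ x ^ 2)⁻¹ : ℝ) • fderiv ℝ φ x)
              + ((φ x)⁻¹ : ℝ) • ((8 * u x ^ 7 : ℝ) • fderiv ℝ u x)).smulRight (grad φ x))
            (EuclideanSpace.single i 1) i
        = (u x ^ 8 / φ x) * (fderiv ℝ (grad φ) x (EuclideanSpace.single i 1) i)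
          + ((u x ^ 8 * (-(φ x ^ 2)⁻¹)) * (grad φ x i * grad φ x i)
             + ((φ x)⁻¹ * (8 * u x ^ 7)) * (grad u x i * grad φ x i)) := by
      intro i
      simp only [ContinuousLinearMap.add_apply, ContinuousLinearMap.smul_apply,
        ContinuousLinearMap.smulRight_apply, keyu, keyφ, PiLp.add_apply, PiLp.smul_apply,
        smul_eq_mul]
      ring
    rw [Finset.sum_congr rfl fun i _ => step i]
    rw [Finset.sum_add_distrib, Finset.sum_add_distrib, ← Finset.mul_sum, ← Finset.mul_sum,
      ← Finset.mul_sum, hinner, hinner]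
    rfl
  rw [hg2, hg4, hdvg, norm_sub_sq_real, norm_smul, norm_smul, norm_smul,
    real_inner_smul_left, real_inner_smul_right]
  have hBB : ⟪grad φ x, grad φ x⟫ = ‖grad φ x‖ ^ 2 := real_inner_self_eq_norm_sq _
  rw [hBB]
  have huφ : ⟪grad u x, grad φ x⟫ = ⟪grad u x, grad φ x⟫ := rfl
  set A := ‖grad u x‖ with hA
  set B := ‖grad φ x‖ with hB
  set P := ⟪grad u x, grad φ x⟫ with hP
  set U := u x with hU
  set Φ := φ x with hΦ'
  set L := lap φ x with hL
  simp only [Real.norm_eq_abs, mul_pow, sq_abs]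
  field_simp
  ring
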